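/- Let F_q be a finite field, let c ∈ F_q \ {0, 1}, and let p1, ..., pn be univariate permutation polynomials on F_q each of degree at most d (with each degree > 1) and each with differential uniformity less than q. Let the map F : F_q^n → F_q^n be a GTDS built from the p_i with multiplier polynomials g_i having no zeros and arbitrary h_i. Then for any Δx, Δy ∈ F_q^n, the number of x ∈ F_q^n with F(x + Δx) - c·F(x) = Δy is at most d · q^{n-1-w} · d^w, where w is the number of nonzero entries among the first n-1 coordinates of Δx. -/
import Mathlib
open Polynomial

lemma count_eval_zero_le {F : Type*} [Field F] [Fintype F] [DecidableEq F]
    (q : F[X]) (hq : q ≠ 0) : Nat.card {t : F // q.eval t = 0} ≤ q.natDegree := by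
  have h1 : Nat.card {t : F // q.eval t = 0}
      = (Finset.univ.filter fun t : F => q.eval t = 0).card := by
    rw [Nat.card_eq_fintype_card, Fintype.card_subtype]
  rw [h1]
  have hsub : (Finset.univ.filter fun t : F => q.eval t = 0) ⊆ q.roots.toFinset := by
    intro t ht
    simp only [Finset.mem_filter] at ht
    rw [Multiset.mem_toFinset, mem_roots hq]
    exact ht.2
  calc _ ≤ q.roots.toFinset.card := Finset.card_le_card hsub
    _ ≤ Multiset.card q.roots := q.roots.toFinset_card_le
    _ ≤ q.natDegree := q.card_roots'

lemma qne_of_ne {F : Type*} [Field F] (p : F[X]) (hd1 : 1 < p.natDegree)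
    (α β γ a : F) (hne : α ≠ β) :
    C α * p.comp (X + C a) - C β * p - C γ ≠ 0 := by
  have hp0 : p ≠ 0 := fun h => by simp [h] at hd1
  have hN : p.natDegree ≠ 0 := by omega
  have hcomp_deg : (p.comp (X + C a)).natDegree = p.natDegree := by
    rw [natDegree_comp, natDegree_X_add_C, mul_one]
  have hcomp_lc : (p.comp (X + C a)).leadingCoeff = p.leadingCoeff := by
    rw [leadingCoeff_comp (by rw [natDegree_X_add_C]; exact one_ne_zero)]
    simp [leadingCoeff_X_add_C]
  intro h0
  have hc : (C α * p.comp (X + C a) - C β * p - C γ).coeff p.natDegree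
      = (α - β) * p.leadingCoeff := by
    have h1 : (p.comp (X + C a)).coeff p.natDegree = p.leadingCoeff := by
      conv_lhs => rw [← hcomp_deg]
      rw [← leadingCoeff]; exact hcomp_lc
    rw [coeff_sub, coeff_sub, coeff_C_mul, coeff_C_mul, h1, coeff_C,
      if_neg hN, ← leadingCoeff]
    ring
  rw [h0, coeff_zero] at hc
  have h2 := mul_ne_zero (sub_ne_zero.mpr hne) (leadingCoeff_ne_zero.mpr hp0)
  exact h2 hc.symm

lemma uni_count {F : Type*} [Field F] [Fintype F] [DecidableEq F]
    (p : F[X]) (d : ℕ) (hd1 : 1 < p.natDegree) (hd : p.natDegree ≤ d)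
    (α β γ a : F) (hα : α ≠ 0) (hβ : β ≠ 0)
    (hcase : α ≠ β ∨ (a ≠ 0 ∧ ∀ b : F,
      Nat.card {x : F // p.eval (x + a) - p.eval x = b} < Fintype.card F)) :
    Nat.card {t : F // α * p.eval (t + a) - β * p.eval t = γ} ≤ d := by
  set q : F[X] := C α * p.comp (X + C a) - C β * p - C γ with hqdef
  have heval : ∀ t : F, q.eval t = α * p.eval (t + a) - β * p.eval t - γ := by
    intro t; simp [hqdef, eval_comp]
  have hcomp_deg : (p.comp (X + C a)).natDegree = p.natDegree := by
    rw [natDegree_comp, natDegree_X_add_C, mul_one]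
  have hqdeg : q.natDegree ≤ d := by
    apply le_trans (natDegree_sub_le _ _)
    simp only [natDegree_C, max_le_iff]
    refine ⟨le_trans (natDegree_sub_le _ _) ?_, by omega⟩
    simp only [max_le_iff]
    exact ⟨le_trans (natDegree_C_mul_le _ _) (by rw [hcomp_deg]; exact hd),
      le_trans (natDegree_C_mul_le _ _) hd⟩
  have hq0 : q ≠ 0 := by
    by_cases hab : α = β
    · rcases hcase with hne | ⟨ha, hdelta⟩
      · exact absurd hab hne
      intro h0
      subst hab
      have hall : ∀ t : F, p.eval (t + a) - p.eval t = γ / α := by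
        intro t
        have h2 := heval t
        rw [h0, eval_zero] at h2
        field_simp
        linear_combination -h2
      have hcard : Nat.card {x : F // p.eval (x + a) - p.eval x = γ / α}
          = Fintype.card F := by
        rw [Nat.card_eq_fintype_card, Fintype.card_subtype,
          Finset.filter_true_of_mem (fun x _ => hall x)]
        simp
      have := hdelta (γ / α)
      omega
    · exact qne_of_ne p hd1 α β γ a hab
  have hequiv : Nat.card {t : F // α * p.eval (t + a) - β * p.eval t = γ}
      = Nat.card {t : F // q.eval t = 0} := by
    apply Nat.card_congr
    apply Equiv.subtypeEquivRight
    intro t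
    rw [heval t, sub_eq_zero]
  rw [hequiv]
  exact le_trans (count_eval_zero_le q hq0) hqdeg


lemma key_count {F : Type*} [Fintype F] (z : F) : ∀ (n : ℕ)
    (P : Fin n → F → (Fin n → F) → Prop)
    (_ : ∀ i t x y, (∀ j, i < j → x j = y j) → P i t x → P i t y)
    (m : Fin n → ℕ)
    (_ : ∀ i x, Nat.card {t : F // P i t x} ≤ m i),
    Nat.card {x : Fin n → F // ∀ i, P i (x i) x} ≤ ∏ i, m i := by
  intro n
  induction n with
  | zero =>
    intro P hdep m hm
    have : Nat.card {x : Fin 0 → F // ∀ i, P i (x i) x} ≤ Nat.card (Fin 0 → F) :=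
      Nat.card_le_card_of_injective Subtype.val Subtype.val_injective
    simpa using this
  | succ n ih =>
    intro P hdep m hm
    classical
    set Q : Fin n → F → (Fin n → F) → Prop :=
      fun i t xs => P i.succ t (Fin.cons z xs) with hQdef
    have hQdep : ∀ i t x y, (∀ j, i < j → x j = y j) → Q i t x → Q i t y := by
      intro i t x y hagree hQ
      refine hdep i.succ t _ _ ?_ hQ
      intro j hj
      rcases Fin.eq_succ_of_ne_zero (show j ≠ 0 from Fin.pos_iff_ne_zero.mp
        (lt_trans (Fin.succ_pos i) hj)) with ⟨j', rfl⟩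
      simp only [Fin.cons_succ]
      exact hagree j' (by rwa [← Fin.succ_lt_succ_iff])
    have hQm : ∀ i xs, Nat.card {t : F // Q i t xs} ≤ m i.succ := by
      intro i xs; exact hm i.succ (Fin.cons z xs)
    have ihQ := ih Q hQdep (fun i : Fin n => m i.succ) hQm
    set T := {xs : Fin n → F // ∀ i, Q i (xs i) xs} with hTdef
    set e : {x : Fin (n + 1) → F // ∀ i, P i (x i) x} →
        Σ xs : T, {a : F // P 0 a (Fin.cons z xs.1)} :=
      fun x => ⟨⟨Fin.tail x.1, by
        intro i
        refine hdep i.succ (x.1 i.succ) x.1 _ ?_ (x.2 i.succ)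
        intro j hj
        rcases Fin.eq_succ_of_ne_zero (show j ≠ 0 from Fin.pos_iff_ne_zero.mp
          (lt_trans (Fin.succ_pos i) hj)) with ⟨j', rfl⟩
        simp [Fin.tail]⟩, ⟨x.1 0, by
        refine hdep 0 (x.1 0) x.1 _ ?_ (x.2 0)
        intro j hj
        rcases Fin.eq_succ_of_ne_zero (Fin.pos_iff_ne_zero.mp hj) with ⟨j', rfl⟩
        simp [Fin.tail]⟩⟩ with hedef
    have he : Function.Injective e := by
      intro x y hxy
      have htail : Fin.tail x.1 = Fin.tail y.1 :=
        congrArg Subtype.val (congrArg Sigma.fst hxy)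
      have hhead : x.1 0 = y.1 0 := congrArg (fun s => s.2.1) hxy
      apply Subtype.ext
      ext j
      rcases Fin.eq_zero_or_eq_succ j with rfl | ⟨j', rfl⟩
      · exact hhead
      · exact congrFun htail j'
    have hcard1 : Nat.card {x : Fin (n + 1) → F // ∀ i, P i (x i) x}
        ≤ Nat.card (Σ xs : T, {a : F // P 0 a (Fin.cons z xs.1)}) :=
      Nat.card_le_card_of_injective e he
    haveI : Fintype T := Fintype.ofFinite T
    have hsigma : Nat.card (Σ xs : T, {a : F // P 0 a (Fin.cons z xs.1)})
        = ∑ xs : T, Nat.card {a : F // P 0 a (Fin.cons z xs.1)} := by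
      rw [Nat.card_eq_fintype_card, Fintype.card_sigma]
      congr 1
      ext xs
      rw [Nat.card_eq_fintype_card]
    have hsum : ∑ xs : T, Nat.card {a : F // P 0 a (Fin.cons z xs.1)}
        ≤ Fintype.card T * m 0 := by
      calc _ ≤ ∑ _xs : T, m 0 := Finset.sum_le_sum (fun xs _ => hm 0 _)
        _ = Fintype.card T * m 0 := by rw [Finset.sum_const, Finset.card_univ, smul_eq_mul]
    calc Nat.card {x : Fin (n + 1) → F // ∀ i, P i (x i) x}
        ≤ _ := hcard1
      _ = _ := hsigma
      _ ≤ Fintype.card T * m 0 := hsum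
      _ ≤ (∏ i : Fin n, m i.succ) * m 0 := by
          rw [← Nat.card_eq_fintype_card]
          exact Nat.mul_le_mul_right _ ihQ
      _ = ∏ i, m i := by rw [Fin.prod_univ_succ, mul_comm]


theorem stmt16 (F : Type*) [Field F] [Fintype F] [DecidableEq F] (n : ℕ)
    (c : F) (hc0 : c ≠ 0) (hc1 : c ≠ 1) (d : ℕ)
    (p : Fin (n + 1) → F[X])
    (hperm : ∀ i, Function.Bijective fun x : F => (p i).eval x)
    (hdeg1 : ∀ i, 1 < (p i).natDegree)
    (hdegd : ∀ i, (p i).natDegree ≤ d)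
    (hdelta : ∀ i, ∀ a : F, a ≠ 0 → ∀ b : F,
      Nat.card {x : F // (p i).eval (x + a) - (p i).eval x = b} < Fintype.card F)
    (g h : Fin (n + 1) → (Fin (n + 1) → F) → F)
    (hgdep : ∀ i, ∀ x y : Fin (n + 1) → F, (∀ j, i < j → x j = y j) → g i x = g i y)
    (hhdep : ∀ i, ∀ x y : Fin (n + 1) → F, (∀ j, i < j → x j = y j) → h i x = h i y)
    (hgne : ∀ i x, g i x ≠ 0)
    (hglast : ∀ x, g (Fin.last n) x = 1)
    (hhlast : ∀ x, h (Fin.last n) x = 0)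
    (G : (Fin (n + 1) → F) → Fin (n + 1) → F)
    (hG : ∀ x i, G x i = (p i).eval (x i) * g i x + h i x)
    (Δx Δy : Fin (n + 1) → F) :
    Nat.card {x : Fin (n + 1) → F // ∀ i, G (x + Δx) i - c * G x i = Δy i}
      ≤ d * Fintype.card F ^
            (n - (Finset.univ.filter fun i : Fin (n + 1) =>
              i ≠ Fin.last n ∧ Δx i ≠ 0).card)
          * d ^ (Finset.univ.filter fun i : Fin (n + 1) =>
              i ≠ Fin.last n ∧ Δx i ≠ 0).card := by
  classical
  set w := (Finset.univ.filter fun i : Fin (n + 1) =>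
      i ≠ Fin.last n ∧ Δx i ≠ 0).card with hwdef
  clear_value w
  set P : Fin (n + 1) → F → (Fin (n + 1) → F) → Prop := fun i t x =>
    (p i).eval (t + Δx i) * g i (x + Δx) + h i (x + Δx)
      - c * ((p i).eval t * g i x + h i x) = Δy i with hPdef
  set m : Fin (n + 1) → ℕ := fun i =>
    if i = Fin.last n ∨ Δx i ≠ 0 then d else Fintype.card F with hmdef
  clear_value P m
  have hsetcong : Nat.card {x : Fin (n + 1) → F // ∀ i, G (x + Δx) i - c * G x i = Δy i}
      = Nat.card {x : Fin (n + 1) → F // ∀ i, P i (x i) x} := by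
    apply Nat.card_congr
    apply Equiv.subtypeEquivRight
    intro x
    constructor <;> intro hx i <;> have := hx i <;>
      simp only [hPdef, hG, Pi.add_apply] at this ⊢ <;> exact this
  have hdep : ∀ i t (x y : Fin (n + 1) → F),
      (∀ j, i < j → x j = y j) → P i t x → P i t y := by
    intro i t x y hagree hP
    have hagree' : ∀ j, i < j → (x + Δx) j = (y + Δx) j := by
      intro j hj; simp only [Pi.add_apply, hagree j hj]
    simp only [hPdef] at hP ⊢
    rw [← hgdep i (x + Δx) (y + Δx) hagree', ← hhdep i (x + Δx) (y + Δx) hagree',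
      ← hgdep i x y hagree, ← hhdep i x y hagree]
    exact hP
  have hm : ∀ i (x : Fin (n + 1) → F), Nat.card {t : F // P i t x} ≤ m i := by
    intro i x
    set α := g i (x + Δx) with hα
    set β := c * g i x with hβ
    set a := Δx i with ha
    set γ := Δy i - h i (x + Δx) + c * h i x with hγ
    have hαne : α ≠ 0 := hgne i (x + Δx)
    have hβne : β ≠ 0 := mul_ne_zero hc0 (hgne i x)
    have hcong : Nat.card {t : F // P i t x}
        = Nat.card {t : F // α * (p i).eval (t + a) - β * (p i).eval t = γ} := by
      apply Nat.card_congr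
      apply Equiv.subtypeEquivRight
      intro t
      simp only [hPdef, hγ, hβ, hα, ha]
      constructor <;> intro hh <;> linear_combination hh
    by_cases hcond : i = Fin.last n ∨ Δx i ≠ 0
    · have hmi : m i = d := by simp only [hmdef]; exact if_pos hcond
      rw [hmi, hcong]
      apply uni_count (p i) d (hdeg1 i) (hdegd i) α β γ a hαne hβne
      by_cases hab : α = β
      · right
        rcases hcond with hl | hne
        · exfalso
          apply hc1
          subst hl
          rw [hα, hβ, hglast, hglast, mul_one] at hab
          exact hab.symm
        · exact ⟨hne, fun b => hdelta i a hne b⟩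
      · exact Or.inl hab
    · have hmi : m i = Fintype.card F := by simp only [hmdef]; exact if_neg hcond
      rw [hmi]
      calc Nat.card {t : F // P i t x} ≤ Nat.card F :=
            Nat.card_le_card_of_injective Subtype.val Subtype.val_injective
        _ = Fintype.card F := Nat.card_eq_fintype_card
  have hkey := key_count (0 : F) (n + 1) P hdep m hm
  rw [hsetcong]
  refine le_trans hkey (le_of_eq ?_)
  -- compute the product
  have hfilter : (Finset.univ.filter fun i : Fin (n + 1) => i = Fin.last n ∨ Δx i ≠ 0)
      = insert (Fin.last n)
        (Finset.univ.filter fun i : Fin (n + 1) => i ≠ Fin.last n ∧ Δx i ≠ 0) := by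
    ext i
    simp only [Finset.mem_filter, Finset.mem_univ, true_and, Finset.mem_insert]
    by_cases hi : i = Fin.last n <;> tauto
  have hnotmem : Fin.last n ∉
      (Finset.univ.filter fun i : Fin (n + 1) => i ≠ Fin.last n ∧ Δx i ≠ 0) := by
    simp
  have hcard1 : (Finset.univ.filter fun i : Fin (n + 1) =>
      i = Fin.last n ∨ Δx i ≠ 0).card = w + 1 := by
    rw [hfilter, Finset.card_insert_of_notMem hnotmem, hwdef]
  have hwle : w ≤ n := by
    have hsub : (Finset.univ.filter fun i : Fin (n + 1) => i ≠ Fin.last n ∧ Δx i ≠ 0)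
        ⊆ Finset.univ.erase (Fin.last n) := by
      intro i hi
      simp only [Finset.mem_filter] at hi
      exact Finset.mem_erase.mpr ⟨hi.2.1, Finset.mem_univ i⟩
    have := Finset.card_le_card hsub
    rw [Finset.card_erase_of_mem (Finset.mem_univ _), Finset.card_univ,
      Fintype.card_fin] at this
    clear hsetcong hkey
    omega
  have hcard2 : (Finset.univ.filter fun i : Fin (n + 1) =>
      ¬(i = Fin.last n ∨ Δx i ≠ 0)).card = n - w := by
    have := Finset.card_filter_add_card_filter_not (s := Finset.univ)
      (p := fun i : Fin (n + 1) => i = Fin.last n ∨ Δx i ≠ 0)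
    rw [Finset.card_univ, Fintype.card_fin, hcard1] at this
    clear hsetcong hkey
    omega
  rw [hmdef, Finset.prod_ite, Finset.prod_const, Finset.prod_const, hcard1, hcard2]
  rw [pow_succ]
  ring
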